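/- arXiv:1709.08626 — 2 statements merged into one kernel-verified Lean document; each statement's English description precedes it below -/
import Mathlib

section
/- Let C be an M-copula (joint CDF of a random vector U on [0,1]^M with uniform marginals) and F₁,…,F_M univariate CDFs that are continuous and strictly increasing onto (0,1). Then F(x₁,…,x_M) := C(F₁(x₁),…,F_M(x_M)) is the joint CDF of the random vector (F₁⁻¹(U₁),…,F_M⁻¹(U_M)), and its marginals are F₁,…,F_M. -/
open MeasureTheory

/-- Converse direction of Sklar's theorem for continuous strictly increasing marginals:
if `C` is the joint CDF of a vector `U` on `[0,1]^M` with uniform marginals (an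
`M`-copula), and `F₁,…,F_M` are continuous strictly increasing CDFs onto `(0,1)` with
inverses `G₁,…,G_M`, then `F(x) := C(F₁(x₁),…,F_M(x_M))` is the joint CDF of
`(G₁(U₁),…,G_M(U_M))`, whose marginals are `F₁,…,F_M`. -/
theorem sklar_converse
    {Ω : Type*} [MeasurableSpace Ω] (μ : Measure Ω) [IsProbabilityMeasure μ]
    (M : ℕ) (U : Ω → Fin M → ℝ) (hUmeas : Measurable U)
    (hUrange : ∀ ω i, U ω i ∈ Set.Icc (0:ℝ) 1)
    (hUunif : ∀ i, ∀ t ∈ Set.Icc (0:ℝ) 1, μ {ω | U ω i ≤ t} = ENNReal.ofReal t)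
    (C : (Fin M → ℝ) → ℝ) (hC : ∀ u, C u = (μ {ω | ∀ i, U ω i ≤ u i}).toReal)
    (F : Fin M → ℝ → ℝ)
    (hFcont : ∀ i, Continuous (F i)) (hFmono : ∀ i, StrictMono (F i))
    (hFrange : ∀ i, Set.range (F i) = Set.Ioo (0:ℝ) 1)
    (G : Fin M → ℝ → ℝ)
    (hGF : ∀ i x, G i (F i x) = x)
    (hFG : ∀ i, ∀ y ∈ Set.Ioo (0:ℝ) 1, F i (G i y) = y) :
    (∀ x : Fin M → ℝ,
        (μ {ω | ∀ i, G i (U ω i) ≤ x i}).toReal = C (fun i => F i (x i))) ∧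
    ∀ i, ∀ x : ℝ, (μ {ω | G i (U ω i) ≤ x}).toReal = F i x := by
  have hUm : ∀ i, Measurable fun ω => U ω i := fun i =>
    (measurable_pi_apply i).comp hUmeas
  -- U_i = 0 is null
  have h0 : ∀ i, μ {ω | U ω i = 0} = 0 := by
    intro i
    have h := hUunif i 0 ⟨le_refl _, zero_le_one⟩
    simp only [ENNReal.ofReal_zero] at h
    refine measure_mono_null (fun ω hω => ?_) h
    simp only [Set.mem_setOf_eq] at hω ⊢
    exact hω.le
  -- U_i = 1 is null
  have h1 : ∀ i, μ {ω | U ω i = 1} = 0 := by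
    intro i
    refine le_antisymm (ENNReal.le_of_forall_pos_le_add fun (ε : NNReal) hε _ => ?_) zero_le
    rw [zero_add]
    rcases le_or_gt 1 (ε : ENNReal) with h | h
    · exact le_trans (prob_le_one) h
    · have hε1 : (ε : ℝ) < 1 := by
        exact_mod_cast (by exact_mod_cast h : (ε : ENNReal) < 1)
      have hsub : {ω | U ω i = 1} ⊆ {ω | U ω i ≤ 1} \ {ω | U ω i ≤ 1 - ε} := by
        intro ω hω
        simp only [Set.mem_setOf_eq, Set.mem_diff] at hω ⊢
        constructor
        · exact hω.le
        · intro hle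
          have : (0:ℝ) < ε := hε
          linarith [hω ▸ hle]
      have hεpos : (0:ℝ) < ε := hε
      have hsubset : {ω | U ω i ≤ 1 - (ε:ℝ)} ⊆ {ω | U ω i ≤ 1} :=
        fun ω hω => hω.trans (sub_le_self 1 hεpos.le)
      have hnm : NullMeasurableSet {ω | U ω i ≤ 1 - (ε:ℝ)} μ :=
        (measurableSet_le (hUm i) measurable_const).nullMeasurableSet
      have hd : μ ({ω | U ω i ≤ 1} \ {ω | U ω i ≤ 1 - (ε:ℝ)})
          = μ {ω | U ω i ≤ 1} - μ {ω | U ω i ≤ 1 - (ε:ℝ)} :=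
        measure_diff hsubset hnm (measure_ne_top _ _)
      refine le_trans (measure_mono hsub) ?_
      rw [hd, hUunif i 1 ⟨zero_le_one, le_refl _⟩,
          hUunif i (1 - ε) ⟨by linarith, by linarith⟩,
          ← ENNReal.ofReal_sub _ (by linarith)]
      simp only [sub_sub_cancel]
      rw [ENNReal.ofReal_coe_nnreal]
  -- a.e., every coordinate lies in (0,1)
  have hae : ∀ᵐ ω ∂μ, ∀ i, U ω i ∈ Set.Ioo (0:ℝ) 1 := by
    rw [MeasureTheory.ae_all_iff]
    intro i
    have hA : ∀ᵐ ω ∂μ, U ω i ≠ 0 := by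
      rw [ae_iff]; simpa using h0 i
    have hB : ∀ᵐ ω ∂μ, U ω i ≠ 1 := by
      rw [ae_iff]; simpa using h1 i
    filter_upwards [hA, hB] with ω hA hB
    rcases hUrange ω i with ⟨hl, hr⟩
    exact ⟨lt_of_le_of_ne hl (Ne.symm hA), lt_of_le_of_ne hr hB⟩
  -- key equivalence for u ∈ (0,1)
  have key : ∀ (i) (u x : ℝ), u ∈ Set.Ioo (0:ℝ) 1 → (G i u ≤ x ↔ u ≤ F i x) := by
    intro i u x hu
    constructor
    · intro h
      have := (hFmono i).monotone h
      rwa [hFG i u hu] at this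
    · intro h
      by_contra hcon
      push_neg at hcon
      have := hFmono i hcon
      rw [hFG i u hu] at this
      linarith
  constructor
  · intro x
    rw [hC]
    congr 1
    apply measure_congr
    rw [Filter.eventuallyEq_set]
    filter_upwards [hae] with ω hω
    exact forall_congr' fun i => key i (U ω i) (x i) (hω i)
  · intro i x
    have hFx : F i x ∈ Set.Ioo (0:ℝ) 1 := by
      rw [← hFrange i]; exact Set.mem_range_self x
    have : μ {ω | G i (U ω i) ≤ x} = μ {ω | U ω i ≤ F i x} := by
      apply measure_congr
      rw [Filter.eventuallyEq_set]
      filter_upwards [hae] with ω hω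
      exact key i (U ω i) x (hω i)
    rw [this, hUunif i (F i x) ⟨hFx.1.le, hFx.2.le⟩,
      ENNReal.toReal_ofReal hFx.1.le]
end

section
/- If (Z₁,Z₂) is bivariate standard Gaussian with correlation ρ ∈ (−1,1), then the upper tail dependence coefficient lim_{u→1⁻} P(Z₁ > Φ⁻¹(u) | Z₂ > Φ⁻¹(u)) equals 0. -/
open MeasureTheory ProbabilityTheory Filter
noncomputable def stdTail (x : ℝ) : ℝ := ((gaussianReal 0 1) (Set.Ioi x)).toReal

lemma stdTail_eq (x : ℝ) : stdTail x = ∫ y in Set.Ioi x, gaussianPDFReal 0 1 y := by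
  rw [stdTail, gaussianReal_apply_eq_integral 0 one_ne_zero, ENNReal.toReal_ofReal]
  exact setIntegral_nonneg measurableSet_Ioi (fun _ _ => gaussianPDFReal_nonneg _ _ _)

lemma pdf_eq (x : ℝ) :
    gaussianPDFReal 0 1 x = (Real.sqrt (2*Real.pi))⁻¹ * Real.exp (-(x^2)/2) := by
  simp [gaussianPDFReal]

lemma stdTail_le {x : ℝ} (hx : 0 < x) : stdTail x ≤ gaussianPDFReal 0 1 x / x := by
  rw [stdTail_eq]
  have key : ∀ y ∈ Set.Ioi x, gaussianPDFReal 0 1 y ≤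
      gaussianPDFReal 0 1 x * Real.exp (x^2) * Real.exp (-(x*y)) := by
    intro y hy
    simp only [Set.mem_Ioi] at hy
    rw [pdf_eq, pdf_eq, mul_assoc, mul_assoc, ← Real.exp_add, ← Real.exp_add]
    refine mul_le_mul_of_nonneg_left (Real.exp_le_exp.mpr ?_) (by positivity)
    nlinarith [sq_nonneg (x - y)]
  calc (∫ y in Set.Ioi x, gaussianPDFReal 0 1 y)
      ≤ ∫ y in Set.Ioi x, gaussianPDFReal 0 1 x * Real.exp (x^2) * Real.exp (-(x*y)) := by
        refine setIntegral_mono_on (integrable_gaussianPDFReal 0 1).integrableOn ?_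
          measurableSet_Ioi key
        have := (exp_neg_integrableOn_Ioi x hx).const_mul
          (gaussianPDFReal 0 1 x * Real.exp (x^2))
        simpa [neg_mul, mul_assoc, IntegrableOn] using this
    _ = gaussianPDFReal 0 1 x * Real.exp (x^2) * ∫ y in Set.Ioi x, Real.exp (-(x*y)) := by
        rw [MeasureTheory.integral_const_mul]
    _ = gaussianPDFReal 0 1 x * Real.exp (x^2) * (x⁻¹ * Real.exp (-(x*x))) := by
        rw [MeasureTheory.integral_comp_mul_left_Ioi (fun u => Real.exp (-u)) x hx,
          integral_exp_neg_Ioi, smul_eq_mul]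
    _ = gaussianPDFReal 0 1 x / x := by
        rw [mul_comm x⁻¹, ← mul_assoc, mul_assoc (gaussianPDFReal 0 1 x), ← Real.exp_add]
        rw [show x^2 + -(x*x) = 0 by ring, Real.exp_zero, mul_one, div_eq_mul_inv]

lemma stdTail_ge {x : ℝ} (hx : 0 ≤ x) : gaussianPDFReal 0 1 (x+1) ≤ stdTail x := by
  rw [stdTail_eq]
  have h1 : gaussianPDFReal 0 1 (x+1) = ∫ _ in Set.Ioc x (x+1), gaussianPDFReal 0 1 (x+1) := by
    simp [Real.volume_Ioc]
  rw [h1]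
  calc (∫ _ in Set.Ioc x (x+1), gaussianPDFReal 0 1 (x+1))
      ≤ ∫ y in Set.Ioc x (x+1), gaussianPDFReal 0 1 y := by
        refine setIntegral_mono_on (integrableOn_const ?_)
          (integrable_gaussianPDFReal 0 1).integrableOn measurableSet_Ioc ?_
        · simp [Real.volume_Ioc]
        · intro y hy
          simp only [Set.mem_Ioc] at hy
          rw [pdf_eq, pdf_eq]
          refine mul_le_mul_of_nonneg_left (Real.exp_le_exp.mpr ?_) (by positivity)
          nlinarith [hy.1, hy.2]
    _ ≤ ∫ y in Set.Ioi x, gaussianPDFReal 0 1 y := by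
        refine setIntegral_mono_set (integrable_gaussianPDFReal 0 1).integrableOn
          (ae_of_all _ fun y => gaussianPDFReal_nonneg _ _ _) (ae_of_all _ ?_)
        exact fun y hy => hy.1

lemma stdTail_pos (x : ℝ) : 0 < stdTail x := by
  have h1 : 0 < stdTail (max x 0) :=
    lt_of_lt_of_le (gaussianPDFReal_pos _ _ _ one_ne_zero) (stdTail_ge (le_max_right _ _))
  refine lt_of_lt_of_le h1 ?_
  exact ENNReal.toReal_mono (measure_ne_top _ _)
    (measure_mono (Set.Ioi_subset_Ioi (le_max_left _ _)))

lemma stdTail_nonneg (x : ℝ) : 0 ≤ stdTail x := ENNReal.toReal_nonneg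

lemma Iic_toReal_lt_one (M : ℝ) : ((gaussianReal 0 1) (Set.Iic M)).toReal < 1 := by
  have h := stdTail_pos M
  have hsum : ((gaussianReal 0 1) (Set.Iic M)).toReal + stdTail M = 1 := by
    rw [stdTail, ← ENNReal.toReal_add (measure_ne_top _ _) (measure_ne_top _ _),
      ← measure_union (Set.Iic_disjoint_Ioi le_rfl) measurableSet_Ioi,
      Set.Iic_union_Ioi, measure_univ, ENNReal.toReal_one]
  linarith

lemma tendsto_exp_quad (A C D : ℝ) (hA : 0 < A) :
    Tendsto (fun t : ℝ => Real.exp (-(A*t^2) + C*t + D)) atTop (nhds 0) := by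
  apply Real.tendsto_exp_atBot.comp
  have heq : ∀ t : ℝ, -(A*t^2) + C*t + D = t * (-(A*t) + C) + D := fun t => by ring
  simp only [heq]
  apply tendsto_atBot_add_const_right
  refine Tendsto.atTop_mul_atBot₀ tendsto_id ?_
  apply tendsto_atBot_add_const_right
  exact tendsto_neg_atTop_atBot.comp (tendsto_id.const_mul_atTop hA)

lemma combine1 (Ka a' e1 e4 e5 X : ℝ) (ha' : a' ≠ 0) (hKa : Ka ≠ 0)
    (hX : X = e1 - e4 - e5) :
    Ka * Real.exp e1 / a' / (Ka * Real.exp e4 * (Ka * Real.exp e5))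
      = (Ka⁻¹/a') * Real.exp X := by
  subst hX
  rw [Real.exp_sub, Real.exp_sub]
  field_simp

lemma combine2 (Ka b' e2 e3 e4 e5 X : ℝ) (hb' : b' ≠ 0) (hKa : Ka ≠ 0)
    (hX : X = e2 + e3 - e4 - e5) :
    (Ka * Real.exp e2) * (Ka * Real.exp e3 / b') / (Ka * Real.exp e4 * (Ka * Real.exp e5))
      = (1/b') * Real.exp X := by
  subst hX
  rw [Real.exp_sub, Real.exp_sub, Real.exp_add]
  field_simp

set_option maxHeartbeats 1000000 in
/-- Asymptotic tail independence of the Gaussian copula: if `(Z₁, Z₂)` is a centered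
bivariate Gaussian vector with unit variances and correlation `ρ ∈ (-1,1)` (realised
as `Z₂ = ρZ₁ + √(1-ρ²)W` with `Z₁, W` independent standard normals), and `Φ⁻¹` is the
inverse of the standard normal CDF `Φ`, then
`lim_{u→1⁻} P(Z₁ > Φ⁻¹(u) | Z₂ > Φ⁻¹(u)) = 0`. -/
theorem gaussian_copula_tail_independence
    {Ω : Type*} [MeasurableSpace Ω] (μ : Measure Ω) [IsProbabilityMeasure μ]
    (Z₁ W : Ω → ℝ) (hZ₁ : Measurable Z₁) (hW : Measurable W)
    (hZ₁law : Measure.map Z₁ μ = gaussianReal 0 1)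
    (hWlaw : Measure.map W μ = gaussianReal 0 1)
    (hindep : IndepFun Z₁ W μ)
    (ρ : ℝ) (hρ : ρ ∈ Set.Ioo (-1:ℝ) 1)
    (Z₂ : Ω → ℝ) (hZ₂ : Z₂ = fun ω => ρ * Z₁ ω + Real.sqrt (1 - ρ^2) * W ω)
    (Φ : ℝ → ℝ) (hΦ : ∀ x, Φ x = (gaussianReal 0 1 (Set.Iic x)).toReal)
    (Φinv : ℝ → ℝ) (hΦinv : ∀ u ∈ Set.Ioo (0:ℝ) 1, Φ (Φinv u) = u) :
    Tendsto
      (fun u : ℝ =>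
        (μ {ω | Φinv u < Z₁ ω ∧ Φinv u < Z₂ ω}).toReal
          / (μ {ω | Φinv u < Z₂ ω}).toReal)
      (nhdsWithin 1 (Set.Iio 1)) (nhds 0) := by
  obtain ⟨hρ1, hρ2⟩ := hρ
  set s : ℝ := Real.sqrt (1 - ρ^2) with hs_def
  have h1ρ : 0 < 1 - ρ^2 := by nlinarith
  have hs : 0 < s := Real.sqrt_pos.mpr h1ρ
  have hs2 : s^2 = 1 - ρ^2 := Real.sq_sqrt h1ρ.le
  set r : ℝ := max ρ (1/2) with hr_def
  have hrpos : 0 < r := lt_of_lt_of_le (by norm_num) (le_max_right _ _)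
  have hr1 : r < 1 := max_lt hρ2 (by norm_num)
  have hρr : ρ ≤ r := le_max_left _ _
  set a : ℝ := (1 + 1/r)/2 with ha_def
  have h1r : 1 < 1/r := by rw [lt_div_iff₀ hrpos]; linarith
  have ha1 : 1 < a := by rw [ha_def]; linarith
  have hra : r * a < 1 := by
    have : r * a = (r + 1)/2 := by rw [ha_def]; field_simp
    rw [this]; linarith
  -- choose the cut constant c
  obtain ⟨c, hρc, hcZ⟩ : ∃ c : ℝ, ρ * c < 1 ∧
      ∀ z t : ℝ, t < z → z ≤ a*t → 0 < t → ρ * z ≤ ρ * (c*t) := by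
    by_cases h : 0 ≤ ρ
    · refine ⟨a, lt_of_le_of_lt (mul_le_mul_of_nonneg_right hρr (by linarith)) hra, ?_⟩
      intro z t h1 h2 ht
      rw [← mul_assoc]
      calc ρ * z ≤ ρ * (a * t) := mul_le_mul_of_nonneg_left h2 h
        _ = ρ * a * t := by ring
    · refine ⟨1, by linarith, ?_⟩
      intro z t h1 h2 ht
      rw [one_mul]
      exact mul_le_mul_of_nonpos_left h1.le (le_of_not_ge h)
  set b : ℝ := (1 - ρ*c)/s with hb_def
  have hb : 0 < b := div_pos (by linarith) hs
  set d : ℝ := |ρ| + s with hd_def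
  -- the symmetrised first variable
  obtain ⟨ξ, hξm, hξlaw, hξindep, hξd⟩ : ∃ ξ : Ω → ℝ, Measurable ξ ∧
      Measure.map ξ μ = gaussianReal 0 1 ∧ IndepFun ξ W μ ∧
      ∀ ω, ρ * Z₁ ω = |ρ| * ξ ω := by
    by_cases h : 0 ≤ ρ
    · exact ⟨Z₁, hZ₁, hZ₁law, hindep, fun ω => by rw [abs_of_nonneg h]⟩
    · refine ⟨fun ω => -Z₁ ω, hZ₁.neg, ?_, ?_,
        fun ω => by rw [abs_of_neg (lt_of_not_ge h)]; ring⟩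
      · have hco : (fun ω => -Z₁ ω) = (fun x : ℝ => (-1 : ℝ) * x) ∘ Z₁ := by
          funext ω; simp
        rw [hco, ← Measure.map_map (measurable_const_mul (-1)) hZ₁, hZ₁law,
          gaussianReal_map_const_mul]
        have h2 : (⟨(-1:ℝ)^2, sq_nonneg _⟩ : NNReal) * 1 = 1 := by ext; norm_num
        congr 1
        norm_num
      · exact hindep.comp measurable_neg measurable_id
  -- law translations
  have hmapZ : ∀ x : ℝ, (μ (Z₁ ⁻¹' Set.Ioi x)).toReal = stdTail x := by
    intro x
    rw [← Measure.map_apply hZ₁ measurableSet_Ioi, hZ₁law]; rfl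
  have hmapW : ∀ x : ℝ, (μ (W ⁻¹' Set.Ioi x)).toReal = stdTail x := by
    intro x
    rw [← Measure.map_apply hW measurableSet_Ioi, hWlaw]; rfl
  have hmapξ : ∀ x : ℝ, (μ (ξ ⁻¹' Set.Ioi x)).toReal = stdTail x := by
    intro x
    rw [← Measure.map_apply hξm measurableSet_Ioi, hξlaw]; rfl
  -- the dominating function
  set K : ℝ := (Real.sqrt (2*Real.pi))⁻¹ with hK_def
  have hKpos : 0 < K := by
    rw [hK_def]
    exact inv_pos.mpr (Real.sqrt_pos.mpr (by positivity))
  set g : ℝ → ℝ := fun t => (K⁻¹/a) * Real.exp (-(((a^2-1)/2)*t^2) + d*t + 1)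
      + (1/b) * Real.exp (-((b^2/2)*t^2) + d*t + 1) with hg_def
  have hgtendsto : Tendsto g atTop (nhds 0) := by
    rw [hg_def, show (0:ℝ) = (K⁻¹/a) * 0 + (1/b) * 0 by ring]
    exact ((tendsto_exp_quad _ d 1 (by nlinarith)).const_mul _).add
      ((tendsto_exp_quad _ d 1 (by positivity)).const_mul _)
  -- main pointwise bound
  have key : ∀ t : ℝ, 1 ≤ t →
      (μ {ω | t < Z₁ ω ∧ t < Z₂ ω}).toReal / (μ {ω | t < Z₂ ω}).toReal ≤ g t := by
    intro t ht
    have ht0 : 0 < t := lt_of_lt_of_le zero_lt_one ht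
    -- numerator bound
    have hsub : {ω | t < Z₁ ω ∧ t < Z₂ ω} ⊆
        (Z₁ ⁻¹' Set.Ioi (a*t)) ∪ (Z₁ ⁻¹' Set.Ioi t ∩ W ⁻¹' Set.Ioi (b*t)) := by
      rintro ω ⟨h1, h2⟩
      by_cases hcase : a*t < Z₁ ω
      · exact Or.inl hcase
      · push_neg at hcase
        refine Or.inr ⟨h1, ?_⟩
        simp only [hZ₂] at h2
        have hle : ρ * Z₁ ω ≤ ρ * (c*t) := hcZ _ _ h1 hcase ht0
        have hsbt : s * (b*t) = (1 - ρ*c)*t := by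
          rw [hb_def]; field_simp
        have h3 : s * (b*t) < s * W ω := by
          rw [hsbt]; nlinarith
        exact (mul_lt_mul_iff_right₀ hs).mp h3
    have hAB : μ (Z₁ ⁻¹' Set.Ioi t ∩ W ⁻¹' Set.Ioi (b*t))
        = μ (Z₁ ⁻¹' Set.Ioi t) * μ (W ⁻¹' Set.Ioi (b*t)) :=
      hindep.measure_inter_preimage_eq_mul _ _ measurableSet_Ioi measurableSet_Ioi
    have hnum : (μ {ω | t < Z₁ ω ∧ t < Z₂ ω}).toReal
        ≤ stdTail (a*t) + stdTail t * stdTail (b*t) := by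
      have h1 : μ {ω | t < Z₁ ω ∧ t < Z₂ ω}
          ≤ μ (Z₁ ⁻¹' Set.Ioi (a*t)) + μ (Z₁ ⁻¹' Set.Ioi t ∩ W ⁻¹' Set.Ioi (b*t)) :=
        le_trans (measure_mono hsub) (measure_union_le _ _)
      have h2 := ENNReal.toReal_mono
        (ENNReal.add_ne_top.mpr ⟨measure_ne_top _ _, measure_ne_top _ _⟩) h1
      rw [ENNReal.toReal_add (measure_ne_top _ _) (measure_ne_top _ _), hAB,
        ENNReal.toReal_mul, hmapZ, hmapZ, hmapW] at h2
      exact h2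
    -- denominator bound
    have hsub2 : ξ ⁻¹' Set.Ioi (|ρ| * t) ∩ W ⁻¹' Set.Ioi (s*t) ⊆ {ω | t < Z₂ ω} := by
      rintro ω ⟨h1, h2⟩
      simp only [Set.mem_preimage, Set.mem_Ioi] at h1 h2
      show t < Z₂ ω
      simp only [hZ₂]
      have e1 : ρ * Z₁ ω = |ρ| * ξ ω := hξd ω
      have h1' : |ρ| * (|ρ| * t) ≤ |ρ| * ξ ω := mul_le_mul_of_nonneg_left h1.le (abs_nonneg ρ)
      have h2' : s * (s*t) < s * W ω := mul_lt_mul_of_pos_left h2 hs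
      have hkey : |ρ| * (|ρ| * t) + s * (s*t) = t := by
        have habs : |ρ| * |ρ| = ρ^2 := by rw [← sq_abs ρ]; ring
        linear_combination t*habs + t*hs2
      linarith [e1]
    have hden : stdTail (|ρ| * t) * stdTail (s*t) ≤ (μ {ω | t < Z₂ ω}).toReal := by
      have h1 : μ (ξ ⁻¹' Set.Ioi (|ρ| * t) ∩ W ⁻¹' Set.Ioi (s*t)) ≤ μ {ω | t < Z₂ ω} :=
        measure_mono hsub2
      have h2 := ENNReal.toReal_mono (measure_ne_top _ _) h1
      rwa [hξindep.measure_inter_preimage_eq_mul _ _ measurableSet_Ioi measurableSet_Ioi,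
        ENNReal.toReal_mul, hmapξ, hmapW] at h2
    have hdenpos : 0 < stdTail (|ρ| * t) * stdTail (s*t) :=
      mul_pos (stdTail_pos _) (stdTail_pos _)
    -- first ratio bound
    have hstep1 : (μ {ω | t < Z₁ ω ∧ t < Z₂ ω}).toReal / (μ {ω | t < Z₂ ω}).toReal
        ≤ (stdTail (a*t) + stdTail t * stdTail (b*t)) / (stdTail (|ρ| * t) * stdTail (s*t)) :=
      div_le_div₀ (add_nonneg (stdTail_nonneg _) (mul_nonneg (stdTail_nonneg _) (stdTail_nonneg _)))
        hnum hdenpos hden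
    -- replace tails by pdf bounds
    have hat : 0 < a*t := by positivity
    have hbt : 0 < b*t := by positivity
    have hb1 : stdTail (a*t) ≤ gaussianPDFReal 0 1 (a*t) / a :=
      le_trans (stdTail_le hat)
        (div_le_div_of_nonneg_left (gaussianPDFReal_nonneg _ _ _) (by linarith)
          (by nlinarith))
    have hb2 : stdTail t ≤ gaussianPDFReal 0 1 t :=
      le_trans (stdTail_le ht0)
        (by rw [div_le_iff₀ ht0]; nlinarith [gaussianPDFReal_nonneg 0 1 t])
    have hb3 : stdTail (b*t) ≤ gaussianPDFReal 0 1 (b*t) / b :=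
      le_trans (stdTail_le hbt)
        (div_le_div_of_nonneg_left (gaussianPDFReal_nonneg _ _ _) hb (by nlinarith))
    have hb4 : gaussianPDFReal 0 1 (|ρ| * t+1) ≤ stdTail (|ρ| * t) :=
      stdTail_ge (by positivity)
    have hb5 : gaussianPDFReal 0 1 (s*t+1) ≤ stdTail (s*t) :=
      stdTail_ge (by positivity)
    have hpdenpos : 0 < gaussianPDFReal 0 1 (|ρ| * t+1) * gaussianPDFReal 0 1 (s*t+1) :=
      mul_pos (gaussianPDFReal_pos _ _ _ one_ne_zero) (gaussianPDFReal_pos _ _ _ one_ne_zero)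
    have hstep2 : (stdTail (a*t) + stdTail t * stdTail (b*t)) / (stdTail (|ρ| * t) * stdTail (s*t))
        ≤ (gaussianPDFReal 0 1 (a*t) / a + gaussianPDFReal 0 1 t * (gaussianPDFReal 0 1 (b*t) / b))
          / (gaussianPDFReal 0 1 (|ρ| * t+1) * gaussianPDFReal 0 1 (s*t+1)) := by
      refine div_le_div₀ (add_nonneg (div_nonneg (gaussianPDFReal_nonneg _ _ _) (by linarith))
        (mul_nonneg (gaussianPDFReal_nonneg _ _ _)
          (div_nonneg (gaussianPDFReal_nonneg _ _ _) hb.le))) ?_ hpdenpos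
        (mul_le_mul hb4 hb5 (gaussianPDFReal_nonneg _ _ _) (stdTail_nonneg _))
      exact add_le_add hb1 (mul_le_mul hb2 hb3 (stdTail_nonneg _) (gaussianPDFReal_nonneg _ _ _))
    -- compute the RHS
    have hKne : K ≠ 0 := ne_of_gt hKpos
    have hane : a ≠ 0 := by linarith
    have hbne : b ≠ 0 := ne_of_gt hb
    have hstep3 : (gaussianPDFReal 0 1 (a*t) / a
          + gaussianPDFReal 0 1 t * (gaussianPDFReal 0 1 (b*t) / b))
          / (gaussianPDFReal 0 1 (|ρ| * t+1) * gaussianPDFReal 0 1 (s*t+1)) = g t := by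
      simp only [pdf_eq, ← hK_def]
      rw [add_div]
      rw [combine1 K a (-((a*t)^2)/2) (-((|ρ| * t+1)^2)/2) (-((s*t+1)^2)/2)
        (-(((a^2-1)/2)*t^2) + d*t + 1) hane hKne ?_,
        combine2 K b (-(t^2)/2) (-((b*t)^2)/2) (-((|ρ| * t+1)^2)/2) (-((s*t+1)^2)/2)
        (-((b^2/2)*t^2) + d*t + 1) hbne hKne ?_]
      · rw [hd_def]
        linear_combination (-(t^2)/2) * hs2 + (-(t^2)/2) * (sq_abs ρ)
      · rw [hd_def]
        linear_combination (-(t^2)/2) * hs2 + (-(t^2)/2) * (sq_abs ρ)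
    calc (μ {ω | t < Z₁ ω ∧ t < Z₂ ω}).toReal / (μ {ω | t < Z₂ ω}).toReal
        ≤ _ := hstep1
      _ ≤ _ := hstep2
      _ = g t := hstep3
  -- Φinv tends to infinity
  have hΦmono : ∀ x y : ℝ, x ≤ y → Φ x ≤ Φ y := by
    intro x y h
    rw [hΦ, hΦ]
    exact ENNReal.toReal_mono (measure_ne_top _ _) (measure_mono (Set.Iic_subset_Iic.mpr h))
  have hΦlt1 : ∀ x : ℝ, Φ x < 1 := fun x => by rw [hΦ]; exact Iic_toReal_lt_one x
  have hΦinvtop : Tendsto Φinv (nhdsWithin 1 (Set.Iio 1)) atTop := by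
    rw [tendsto_atTop]
    intro M
    have hM1 : max (Φ M) (1/2) < 1 := max_lt (hΦlt1 M) (by norm_num)
    filter_upwards [Ioo_mem_nhdsLT_of_mem (Set.mem_Ioc.mpr ⟨hM1, le_refl 1⟩)] with u hu
    have hu01 : u ∈ Set.Ioo (0:ℝ) 1 :=
      ⟨lt_of_lt_of_le (by norm_num) (le_trans (le_max_right _ _) hu.1.le), hu.2⟩
    by_contra hcon
    push_neg at hcon
    have := hΦmono _ _ hcon.le
    rw [hΦinv u hu01] at this
    exact absurd (lt_of_le_of_lt this (lt_of_le_of_lt (le_max_left _ _) hu.1))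
      (lt_irrefl u)
  -- conclude by squeezing
  refine squeeze_zero' ?_ ?_ (hgtendsto.comp hΦinvtop)
  · exact Eventually.of_forall fun u => div_nonneg ENNReal.toReal_nonneg ENNReal.toReal_nonneg
  · filter_upwards [hΦinvtop.eventually (eventually_ge_atTop 1)] with u hu
    exact key (Φinv u) hu
end
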